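/- The function y(x) = U(x) √(U'(x)), with U(x) = tanh(x/√2), satisfies y'' - (3U² - 1) y = -(3/2) y on ℝ; i.e., it is an eigenfunction of the linearized Allen–Cahn operator with eigenvalue -3/2. -/

import Mathlib

noncomputable def U : ℝ → ℝ := fun x => Real.tanh (x / Real.sqrt 2)

noncomputable def y : ℝ → ℝ := fun x => U x * Real.sqrt (deriv U x)

namespace SecondEig

noncomputable def c : ℝ := Real.sqrt (1 / Real.sqrt 2)

lemma cosh_pos (x : ℝ) : 0 < Real.cosh (x / Real.sqrt 2) := Real.cosh_pos _

lemma hasDerivAt_U (x : ℝ) :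
    HasDerivAt U ((Real.cosh (x / Real.sqrt 2) * (1 / Real.sqrt 2) * Real.cosh (x / Real.sqrt 2)
      - Real.sinh (x / Real.sqrt 2) * (Real.sinh (x / Real.sqrt 2) * (1 / Real.sqrt 2)))
      / Real.cosh (x / Real.sqrt 2) ^ 2) x := by
  have hU : U = fun x => Real.sinh (x / Real.sqrt 2) / Real.cosh (x / Real.sqrt 2) := by
    funext x; simp [U, Real.tanh_eq_sinh_div_cosh]
  rw [hU]
  have ht : HasDerivAt (fun x : ℝ => x / Real.sqrt 2) (1 / Real.sqrt 2) x := by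
    simpa using (hasDerivAt_id x).div_const (Real.sqrt 2)
  exact ((Real.hasDerivAt_sinh _).comp x ht).div ((Real.hasDerivAt_cosh _).comp x ht)
    (ne_of_gt (cosh_pos x))

lemma derivU (x : ℝ) : deriv U x = 1 / (Real.sqrt 2 * Real.cosh (x / Real.sqrt 2) ^ 2) := by
  rw [(hasDerivAt_U x).deriv]
  have h1 : Real.cosh (x / Real.sqrt 2) ^ 2 - Real.sinh (x / Real.sqrt 2) ^ 2 = 1 :=
    Real.cosh_sq_sub_sinh_sq _
  have hc := ne_of_gt (cosh_pos x)
  have hs : (Real.sqrt 2 : ℝ) ≠ 0 := by positivity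
  field_simp
  nlinarith [h1]

lemma y_eq : y = fun x => c * (Real.sinh (x / Real.sqrt 2) / Real.cosh (x / Real.sqrt 2) ^ 2) := by
  funext x
  have hc := cosh_pos x
  have hsqrt : Real.sqrt (deriv U x) = c * (1 / Real.cosh (x / Real.sqrt 2)) := by
    rw [derivU x]
    rw [show (1 : ℝ) / (Real.sqrt 2 * Real.cosh (x / Real.sqrt 2) ^ 2)
        = (1 / Real.sqrt 2) * (1 / Real.cosh (x / Real.sqrt 2)) ^ 2 by
      field_simp]
    rw [Real.sqrt_mul (by positivity), Real.sqrt_sq (by positivity)]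
    rfl
  simp only [y, hsqrt, U, Real.tanh_eq_sinh_div_cosh]
  field_simp

noncomputable def Yd : ℝ → ℝ := fun x =>
  c / Real.sqrt 2 * ((Real.cosh (x / Real.sqrt 2) ^ 2 - 2 * Real.sinh (x / Real.sqrt 2) ^ 2)
    / Real.cosh (x / Real.sqrt 2) ^ 3)

lemma ht (x : ℝ) : HasDerivAt (fun x : ℝ => x / Real.sqrt 2) (1 / Real.sqrt 2) x := by
  simpa using (hasDerivAt_id x).div_const (Real.sqrt 2)

lemma hasDerivAt_y (x : ℝ) : HasDerivAt y (Yd x) x := by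
  rw [y_eq]
  have hs : HasDerivAt (fun x => Real.sinh (x / Real.sqrt 2))
      (Real.cosh (x / Real.sqrt 2) * (1 / Real.sqrt 2)) x :=
    (Real.hasDerivAt_sinh _).comp x (ht x)
  have hc : HasDerivAt (fun x => Real.cosh (x / Real.sqrt 2))
      (Real.sinh (x / Real.sqrt 2) * (1 / Real.sqrt 2)) x :=
    (Real.hasDerivAt_cosh _).comp x (ht x)
  have hc2 : HasDerivAt (fun x => Real.cosh (x / Real.sqrt 2) ^ 2)
      (2 * Real.cosh (x / Real.sqrt 2) ^ 1 * (Real.sinh (x / Real.sqrt 2) * (1 / Real.sqrt 2))) x := by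
    exact hc.pow 2
  have := ((hs.div hc2 (by positivity)).const_mul c)
  refine (this : HasDerivAt (fun y => c * (Real.sinh (y / Real.sqrt 2) / Real.cosh (y / Real.sqrt 2) ^ 2)) _ x).congr_deriv ?_
  have hcn := ne_of_gt (cosh_pos x)
  have hsn : (Real.sqrt 2 : ℝ) ≠ 0 := by positivity
  simp only [Yd]
  field_simp

lemma hasDerivAt_Yd (x : ℝ) : HasDerivAt (Yd)
    (c / Real.sqrt 2 * (((2 * Real.cosh (x / Real.sqrt 2) ^ 1 * (Real.sinh (x / Real.sqrt 2) * (1 / Real.sqrt 2))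
        - 2 * (2 * Real.sinh (x / Real.sqrt 2) ^ 1 * (Real.cosh (x / Real.sqrt 2) * (1 / Real.sqrt 2))))
        * Real.cosh (x / Real.sqrt 2) ^ 3
      - (Real.cosh (x / Real.sqrt 2) ^ 2 - 2 * Real.sinh (x / Real.sqrt 2) ^ 2)
        * (3 * Real.cosh (x / Real.sqrt 2) ^ 2 * (Real.sinh (x / Real.sqrt 2) * (1 / Real.sqrt 2))))
      / (Real.cosh (x / Real.sqrt 2) ^ 3) ^ 2)) x := by
  have hs : HasDerivAt (fun x => Real.sinh (x / Real.sqrt 2))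
      (Real.cosh (x / Real.sqrt 2) * (1 / Real.sqrt 2)) x :=
    (Real.hasDerivAt_sinh _).comp x (ht x)
  have hc : HasDerivAt (fun x => Real.cosh (x / Real.sqrt 2))
      (Real.sinh (x / Real.sqrt 2) * (1 / Real.sqrt 2)) x :=
    (Real.hasDerivAt_cosh _).comp x (ht x)
  have hnum : HasDerivAt (fun x => Real.cosh (x / Real.sqrt 2) ^ 2 - 2 * Real.sinh (x / Real.sqrt 2) ^ 2)
      (2 * Real.cosh (x / Real.sqrt 2) ^ 1 * (Real.sinh (x / Real.sqrt 2) * (1 / Real.sqrt 2))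
        - 2 * (2 * Real.sinh (x / Real.sqrt 2) ^ 1 * (Real.cosh (x / Real.sqrt 2) * (1 / Real.sqrt 2)))) x := by
    exact (hc.pow 2).sub ((hs.pow 2).const_mul 2)
  have hden : HasDerivAt (fun x => Real.cosh (x / Real.sqrt 2) ^ 3)
      (3 * Real.cosh (x / Real.sqrt 2) ^ 2 * (Real.sinh (x / Real.sqrt 2) * (1 / Real.sqrt 2))) x := by
    exact hc.pow 3
  exact ((hnum.div hden (by positivity)).const_mul (c / Real.sqrt 2))

lemma key (S H C r : ℝ) (hH : H ≠ 0) (hr : r ≠ 0) (h2 : r * r = 2) :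
    C / r * (((2 * H ^ 1 * (S * (1/r)) - 2 * (2 * S ^ 1 * (H * (1/r)))) * H ^ 3
      - (H ^ 2 - 2 * S ^ 2) * (3 * H ^ 2 * (S * (1/r)))) / (H ^ 3) ^ 2)
    - (3 * (S / H) ^ 2 - 1) * (C * (S / H ^ 2)) = -(3/2) * (C * (S / H ^ 2)) := by
  field_simp
  linear_combination (C*S*(5*H^2-6*S^2)) * h2

end SecondEig

theorem second_eigenfunction :
    ∀ x : ℝ, deriv (deriv y) x - (3 * (U x) ^ 2 - 1) * y x = -(3 / 2) * y x := by
  intro x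
  have h1 : deriv y = SecondEig.Yd := funext fun z => (SecondEig.hasDerivAt_y z).deriv
  rw [h1, (SecondEig.hasDerivAt_Yd x).deriv, SecondEig.y_eq]
  simp only [U, Real.tanh_eq_sinh_div_cosh]
  have hcn := ne_of_gt (SecondEig.cosh_pos x)
  have hsn : (Real.sqrt 2 : ℝ) ≠ 0 := by positivity
  have h2 : Real.sqrt 2 * Real.sqrt 2 = 2 := Real.mul_self_sqrt (by norm_num)
  exact SecondEig.key _ _ _ _ hcn hsn h2
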